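/- arXiv:1209.3163 — 3 statements merged into one kernel-verified Lean document; each statement's English description precedes it below -/
import Mathlib

section
/- Two Boolean structure functions on n components have the same diagonal reliability polynomial h(x,...,x) if and only if they have the same tail signature (S̄_0,...,S̄_n), where S̄_k = (1/C(n,n-k)) ∑_{|A|=n-k} φ(A). -/
open Finset

lemma group_by_card (n : ℕ) (φ : Finset (Fin n) → ℝ) (x : ℝ) :
    (∑ A : Finset (Fin n), φ A * x ^ A.card * (1 - x) ^ (n - A.card)) =
      ∑ j ∈ Finset.range (n + 1),
        (∑ A ∈ Finset.univ.filter (fun A : Finset (Fin n) => A.card = j), φ A)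
          * x ^ j * (1 - x) ^ (n - j) := by
  rw [← Finset.sum_fiberwise_of_maps_to
    (g := fun A : Finset (Fin n) => A.card) (t := Finset.range (n + 1))
    (fun A _ => Finset.mem_range.mpr (Nat.lt_succ_of_le (by simpa using A.card_le_univ)))]
  refine Finset.sum_congr rfl fun j _ => ?_
  rw [Finset.sum_mul, Finset.sum_mul]
  refine Finset.sum_congr rfl fun A hA => ?_
  rw [(Finset.mem_filter.mp hA).2]

lemma coeffs_zero_of_eval_zero (n : ℕ) (g : ℕ → ℝ)
    (h : ∀ x : ℝ, ∑ j ∈ Finset.range (n + 1), g j * x ^ j * (1 - x) ^ (n - j) = 0) :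
    ∀ j ≤ n, g j = 0 := by
  set Q : Polynomial ℝ := ∑ j ∈ Finset.range (n + 1), Polynomial.C (g j) * Polynomial.X ^ j
    with hQ
  have hQeval : ∀ t : ℝ, t ≠ -1 → Q.eval t = 0 := by
    intro t ht
    have h1 : (1 : ℝ) + t ≠ 0 := by
      intro hc
      apply ht
      linarith
    have key := h (t / (1 + t))
    have hsub : (1 : ℝ) - t / (1 + t) = 1 / (1 + t) := by
      field_simp
      ring
    rw [hsub] at key
    have hterm : ∀ j ∈ Finset.range (n + 1),
        g j * (t / (1 + t)) ^ j * (1 / (1 + t)) ^ (n - j)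
          = g j * t ^ j / (1 + t) ^ n := by
      intro j hj
      have hjn : j ≤ n := Nat.lt_succ_iff.mp (Finset.mem_range.mp hj)
      have hp : (1 + t) ^ j * (1 + t) ^ (n - j) = (1 + t) ^ n := by
        rw [← pow_add, Nat.add_sub_cancel' hjn]
      rw [div_pow, div_pow, one_pow, mul_one_div, ← mul_div_assoc, div_div, hp]
    rw [Finset.sum_congr rfl hterm, ← Finset.sum_div] at key
    have hnum : ∑ j ∈ Finset.range (n + 1), g j * t ^ j = 0 := by
      have := pow_ne_zero n h1
      field_simp at key
      exact key.trans (mul_zero _)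
    simp only [hQ, Polynomial.eval_finset_sum, Polynomial.eval_mul, Polynomial.eval_C,
      Polynomial.eval_pow, Polynomial.eval_X]
    exact hnum
  have hQ0 : Q = 0 := by
    apply Polynomial.eq_zero_of_infinite_isRoot
    apply Set.Infinite.mono (s := ({-1} : Set ℝ)ᶜ)
    · intro x hx
      exact hQeval x hx
    · exact (Set.finite_singleton (-1 : ℝ)).infinite_compl
  intro j hj
  have : Q.coeff j = g j := by
    rw [hQ, Polynomial.finset_sum_coeff]
    rw [Finset.sum_eq_single j]
    · simp
    · intro b _ hb
      simp [Polynomial.coeff_C_mul, Polynomial.coeff_X_pow, Ne.symm hb]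
    · intro hc
      exact absurd (Finset.mem_range.mpr (Nat.lt_succ_of_le hj)) hc
  rw [← this, hQ0, Polynomial.coeff_zero]

/-- two Boolean structure functions have the same diagonal
reliability polynomial iff they have the same tail signature. -/
theorem stmt_5 (n : ℕ) (φ₁ φ₂ : Finset (Fin n) → ℝ)
    (hbool₁ : ∀ A, φ₁ A = 0 ∨ φ₁ A = 1) (hbool₂ : ∀ A, φ₂ A = 0 ∨ φ₂ A = 1) :
    (∀ x : ℝ,
        (∑ A : Finset (Fin n), φ₁ A * x ^ A.card * (1 - x) ^ (n - A.card)) =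
          ∑ A : Finset (Fin n), φ₂ A * x ^ A.card * (1 - x) ^ (n - A.card)) ↔
      (∀ k ∈ Finset.range (n + 1),
        (∑ A ∈ Finset.univ.filter (fun A : Finset (Fin n) => A.card = n - k), φ₁ A)
            / (n.choose (n - k) : ℝ) =
          (∑ A ∈ Finset.univ.filter (fun A : Finset (Fin n) => A.card = n - k), φ₂ A)
            / (n.choose (n - k) : ℝ)) := by
  set S₁ : ℕ → ℝ := fun j =>
    ∑ A ∈ Finset.univ.filter (fun A : Finset (Fin n) => A.card = j), φ₁ A with hS₁
  set S₂ : ℕ → ℝ := fun j =>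
    ∑ A ∈ Finset.univ.filter (fun A : Finset (Fin n) => A.card = j), φ₂ A with hS₂
  constructor
  · intro h k hk
    have hx : ∀ x : ℝ,
        ∑ j ∈ Finset.range (n + 1), (S₁ j - S₂ j) * x ^ j * (1 - x) ^ (n - j) = 0 := by
      intro x
      have := h x
      rw [group_by_card, group_by_card] at this
      have : ∑ j ∈ Finset.range (n + 1),
          (S₁ j * x ^ j * (1 - x) ^ (n - j) - S₂ j * x ^ j * (1 - x) ^ (n - j)) = 0 := by
        rw [Finset.sum_sub_distrib, this, sub_self]
      rw [← this]
      refine Finset.sum_congr rfl fun j _ => by ring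
    have hz := coeffs_zero_of_eval_zero n (fun j => S₁ j - S₂ j) hx (n - k) (Nat.sub_le n k)
    have hz' : S₁ (n - k) - S₂ (n - k) = 0 := hz
    have : S₁ (n - k) = S₂ (n - k) := by linarith
    rw [hS₁, hS₂] at this
    simp only at this
    rw [this]
  · intro h x
    rw [group_by_card, group_by_card]
    refine Finset.sum_congr rfl fun j hj => ?_
    have hjn : j ≤ n := Nat.lt_succ_iff.mp (Finset.mem_range.mp hj)
    have hk : n - j ∈ Finset.range (n + 1) := Finset.mem_range.mpr (Nat.lt_succ_of_le (Nat.sub_le n j))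
    have hkey := h (n - j) hk
    rw [Nat.sub_sub_self hjn] at hkey
    have hc : ((n.choose j : ℕ) : ℝ) ≠ 0 := by
      exact_mod_cast (Nat.choose_pos hjn).ne'
    have : S₁ j = S₂ j := by
      rw [div_eq_div_iff hc hc] at hkey
      exact mul_right_cancel₀ hc hkey
    rw [hS₁, hS₂] at this
    simp only at this
    rw [this]
end

section
/- For a recurrent system with r identical parallel-pair modules (h_χ^R(x) = 2x - 1, n = 2r): if h_ψ^R(x) = ∑_{k=0}^r C(r,k) S̄_{ψ,k} (x-1)^k, then h_φ^R(x+1) = ∑_{k=0}^r C(r,k) S̄_{ψ,k} x^{2k} (2x+1)^{r-k}, and hence the tail signature of the whole system satisfies S̄_ℓ = ∑_{k=max(ℓ-r,0)}^{⌊ℓ/2⌋} [C(r,k) C(r-k, ℓ-2k) / C(2r,ℓ)] · 2^{ℓ-2k} · S̄_{ψ,k} for 0 ≤ ℓ ≤ 2r. -/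
open Finset Polynomial

lemma coeff_two_X_add_one_aux (n j : ℕ) :
    ((2*X+1 : Polynomial ℝ)^n).coeff j = (n.choose j : ℝ) * 2^j := by
  have h : (2*X+1 : Polynomial ℝ) = C 2 * (X + C 2⁻¹) := by
    rw [mul_add, ← C_mul]; norm_num; rfl
  rw [h, mul_pow, ← C_pow, coeff_C_mul, coeff_X_add_C_pow]
  rcases le_or_gt j n with hj | hj
  · have h2 : (2:ℝ)^n * ((2:ℝ)⁻¹)^(n-j) = 2^j := by
      obtain ⟨m, rfl⟩ : ∃ m, n = j + m := ⟨n - j, by omega⟩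
      rw [Nat.add_sub_cancel_left, pow_add, mul_assoc, ← mul_pow]; norm_num
    rw [← mul_assoc, h2]; ring
  · simp [Nat.choose_eq_zero_of_lt hj]

/-- recurrent system made of r identical parallel pairs
(h_χ^R(x) = 2x - 1, n = 2r): expansion of h_φ^R(x+1) and the resulting
tail-signature formula. -/
theorem stmt_18 (r : ℕ) (Sψ : ℕ → ℝ)
    -- the diagonal reliability function of the organizing structure ψ
    (hψ : ℝ → ℝ)
    -- its r-reflection is the Bernstein/Taylor form with coefficients C(r,k) S̄_{ψ,k}
    (hψR : ∀ y : ℝ, y ≠ 0 →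
      y ^ r * hψ (1 / y) = ∑ k ∈ Finset.range (r + 1),
        (r.choose k : ℝ) * Sψ k * (y - 1) ^ k)
    -- the 2r-reflected diagonal reliability polynomial of the whole system:
    -- h_φ^R(x) = x^{2r} h_ψ(x^{-2} h_χ^R(x)) with h_χ^R(x) = 2x - 1
    (p : Polynomial ℝ)
    (hp : ∀ x : ℝ, x ≠ 0 → p.eval x = x ^ (2 * r) * hψ ((2 * x - 1) / x ^ 2)) :
    (p.comp (X + 1) = ∑ k ∈ Finset.range (r + 1),
        Polynomial.C ((r.choose k : ℝ) * Sψ k) * X ^ (2 * k) * (2 * X + 1) ^ (r - k)) ∧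
      ∀ ℓ ≤ 2 * r,
        (p.comp (X + 1)).coeff ℓ / ((2 * r).choose ℓ : ℝ) =
          ∑ k ∈ Finset.Icc (ℓ - r) (ℓ / 2),
            ((r.choose k : ℝ) * ((r - k).choose (ℓ - 2 * k) : ℝ) /
                ((2 * r).choose ℓ : ℝ)) * 2 ^ (ℓ - 2 * k) * Sψ k := by
  have hmain : p.comp (X + 1) = ∑ k ∈ Finset.range (r + 1),
      Polynomial.C ((r.choose k : ℝ) * Sψ k) * X ^ (2 * k) * (2 * X + 1) ^ (r - k) := by
    apply Polynomial.eq_of_infinite_eval_eq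
    apply Set.Infinite.mono (s := ({-1, -(1/2)} : Set ℝ)ᶜ)
    swap
    · exact Set.Finite.infinite_compl (by simp)
    intro t ht
    simp only [Set.mem_compl_iff, Set.mem_insert_iff, Set.mem_singleton_iff, not_or] at ht
    obtain ⟨ht1, ht2⟩ := ht
    have hx : t + 1 ≠ 0 := fun h => ht1 (by linarith)
    have h2x : 2 * (t + 1) - 1 ≠ 0 := fun h => ht2 (by linarith)
    set x : ℝ := t + 1 with hxdef
    have hx2 : x ^ 2 ≠ 0 := pow_ne_zero _ hx
    have hyne : x ^ 2 / (2 * x - 1) ≠ 0 := div_ne_zero hx2 h2x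
    have key := hψR (x ^ 2 / (2 * x - 1)) hyne
    have h1y : 1 / (x ^ 2 / (2 * x - 1)) = (2 * x - 1) / x ^ 2 := by
      rw [one_div, inv_div]
    rw [h1y] at key
    show Polynomial.eval t (p.comp (X+1)) = _
    rw [Polynomial.eval_comp]
    simp only [eval_add, eval_X, eval_one, eval_finset_sum, eval_mul, eval_pow, eval_C,
      eval_ofNat]
    rw [hp x hx]
    have step1 : x ^ (2*r) * hψ ((2*x-1)/x^2)
        = (2*x-1)^r * ((x^2/(2*x-1))^r * hψ ((2*x-1)/x^2)) := by
      rw [div_pow, ← pow_mul, mul_comm 2 r]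
      field_simp
    rw [step1, key, Finset.mul_sum]
    apply Finset.sum_congr rfl
    intro k hk
    have hkr : k ≤ r := Nat.lt_succ_iff.mp (Finset.mem_range.mp hk)
    have hy1 : x^2/(2*x-1) - 1 = t^2/(2*x-1) := by
      rw [eq_div_iff h2x, sub_mul, div_mul_cancel₀ _ h2x, hxdef]
      ring
    rw [hy1, div_pow, ← pow_mul]
    have hsplit : (2*x-1)^r = (2*x-1)^(r-k) * (2*x-1)^k := by
      rw [← pow_add, Nat.sub_add_cancel hkr]
    have h2t : 2*t+1 = 2*x-1 := by rw [hxdef]; ring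
    rw [h2t, hsplit]
    field_simp
  refine ⟨hmain, ?_⟩
  intro ℓ hℓ
  rw [hmain]
  have hcoeff : (∑ k ∈ Finset.range (r + 1),
      Polynomial.C ((r.choose k : ℝ) * Sψ k) * X ^ (2 * k) * (2 * X + 1) ^ (r - k)).coeff ℓ
      = ∑ k ∈ Finset.range (r + 1), ((r.choose k : ℝ) * Sψ k) *
          (if 2 * k ≤ ℓ then ((r - k).choose (ℓ - 2 * k) : ℝ) * 2 ^ (ℓ - 2 * k) else 0) := by
    rw [finset_sum_coeff]
    apply Finset.sum_congr rfl
    intro k _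
    rw [mul_assoc, mul_comm (X ^ (2*k)), ← mul_assoc, coeff_mul_X_pow', coeff_C_mul,
      coeff_two_X_add_one_aux]
    split_ifs <;> simp [mul_assoc]
  have hsub : Finset.Icc (ℓ - r) (ℓ / 2) ⊆ Finset.range (r + 1) := by
    intro k hk
    rw [Finset.mem_Icc] at hk
    rw [Finset.mem_range]
    omega
  have hsum : (∑ k ∈ Finset.range (r + 1), ((r.choose k : ℝ) * Sψ k) *
          (if 2 * k ≤ ℓ then ((r - k).choose (ℓ - 2 * k) : ℝ) * 2 ^ (ℓ - 2 * k) else 0))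
      = ∑ k ∈ Finset.Icc (ℓ - r) (ℓ / 2), ((r.choose k : ℝ) * Sψ k) *
          (((r - k).choose (ℓ - 2 * k) : ℝ) * 2 ^ (ℓ - 2 * k)) := by
    rw [← Finset.sum_subset hsub]
    · apply Finset.sum_congr rfl
      intro k hk
      rw [Finset.mem_Icc] at hk
      rw [if_pos (by omega)]
    · intro k hkr hk
      rw [Finset.mem_range] at hkr
      rw [Finset.mem_Icc] at hk
      push_neg at hk
      rcases le_or_gt (2 * k) ℓ with h2k | h2k
      · rw [if_pos h2k]
        have : r - k < ℓ - 2 * k := by omega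
        rw [Nat.choose_eq_zero_of_lt this]
        simp
      · rw [if_neg (by omega), mul_zero]
  rw [hcoeff, hsum, Finset.sum_div]
  apply Finset.sum_congr rfl
  intro k _
  ring
end

section
/- The structures φ₁(x) = x₁x₂ ⨿ x₂x₃x₄ ⨿ x₅x₆x₇x₈ and φ₂(x) = x₁x₃ ⨿ x₂x₄x₅ ⨿ x₁x₂x₆x₇x₈ on 8 components are distinct Boolean functions but have the same diagonal reliability polynomial h(x) = x² + x³ - x⁶ - x⁷ + x⁸, and hence the same signature. -/
open Finset

/-- The coproduct a ⨿ b = a + b - ab. -/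
def cop (a b : ℝ) : ℝ := a + b - a * b

/-- Indicator of a subset. -/
def ind {n : ℕ} (A : Finset (Fin n)) (i : Fin n) : ℝ := if i ∈ A then 1 else 0

/-- φ₁(x) = x₁x₂ ⨿ x₂x₃x₄ ⨿ x₅x₆x₇x₈ (0-based indices). -/
def phi1 (A : Finset (Fin 8)) : ℝ :=
  cop (cop (ind A 0 * ind A 1) (ind A 1 * ind A 2 * ind A 3))
      (ind A 4 * ind A 5 * ind A 6 * ind A 7)

/-- φ₂(x) = x₁x₃ ⨿ x₂x₄x₅ ⨿ x₁x₂x₆x₇x₈ (0-based indices). -/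
def phi2 (A : Finset (Fin 8)) : ℝ :=
  cop (cop (ind A 0 * ind A 2) (ind A 1 * ind A 3 * ind A 4))
      (ind A 0 * ind A 1 * ind A 5 * ind A 6 * ind A 7)

/-- Tail signature of a structure function on 8 components. -/
noncomputable def tail8 (φ : Finset (Fin 8) → ℝ) (k : ℕ) : ℝ :=
  (∑ A ∈ Finset.univ.filter (fun A : Finset (Fin 8) => A.card = 8 - k), φ A)
    / ((8 : ℕ).choose (8 - k) : ℝ)

def P1 (A : Finset (Fin 8)) : Prop :=
  ((0 ∈ A ∧ 1 ∈ A) ∨ ((1 ∈ A ∧ 2 ∈ A) ∧ 3 ∈ A)) ∨ (((4 ∈ A ∧ 5 ∈ A) ∧ 6 ∈ A) ∧ 7 ∈ A)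

def P2 (A : Finset (Fin 8)) : Prop :=
  ((0 ∈ A ∧ 2 ∈ A) ∨ ((1 ∈ A ∧ 3 ∈ A) ∧ 4 ∈ A)) ∨ ((((0 ∈ A ∧ 1 ∈ A) ∧ 5 ∈ A) ∧ 6 ∈ A) ∧ 7 ∈ A)

instance : DecidablePred P1 := fun A => by unfold P1; infer_instance
instance : DecidablePred P2 := fun A => by unfold P2; infer_instance

lemma mul_ind (p q : Prop) [Decidable p] [Decidable q] :
    (if p then (1:ℝ) else 0) * (if q then 1 else 0) = if p ∧ q then 1 else 0 := by
  by_cases hp : p <;> by_cases hq : q <;> simp [hp, hq]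

lemma cop_ind (p q : Prop) [Decidable p] [Decidable q] :
    cop (if p then (1:ℝ) else 0) (if q then 1 else 0) = if p ∨ q then 1 else 0 := by
  by_cases hp : p <;> by_cases hq : q <;> simp [cop, hp, hq]

lemma phi1_eq (A : Finset (Fin 8)) : phi1 A = if P1 A then 1 else 0 := by
  simp only [phi1, ind, mul_ind, cop_ind, P1]

lemma phi2_eq (A : Finset (Fin 8)) : phi2 A = if P2 A then 1 else 0 := by
  simp only [phi2, ind, mul_ind, cop_ind, P2]

lemma sum_poly (P : Finset (Fin 8) → Prop) [DecidablePred P] (x : ℝ) :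
    (∑ A : Finset (Fin 8), (if P A then (1:ℝ) else 0) * x ^ A.card * (1 - x) ^ (8 - A.card)) =
      ∑ j ∈ Finset.range 9,
        ((Finset.univ.filter (fun A : Finset (Fin 8) => P A ∧ A.card = j)).card : ℝ)
          * (x ^ j * (1 - x) ^ (8 - j)) := by
  have h1 : (∑ A : Finset (Fin 8), (if P A then (1:ℝ) else 0) * x ^ A.card * (1 - x) ^ (8 - A.card))
      = ∑ A ∈ Finset.univ.filter P, x ^ A.card * (1 - x) ^ (8 - A.card) := by
    rw [Finset.sum_filter]
    refine Finset.sum_congr rfl fun A _ => ?_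
    by_cases h : P A <;> simp [h]
  rw [h1, ← Finset.sum_fiberwise_of_maps_to (g := fun A : Finset (Fin 8) => A.card)
      (t := Finset.range 9) (fun A _ => by
        simp only [Finset.mem_range]
        exact Nat.lt_succ_of_le (le_trans (Finset.card_le_card (Finset.subset_univ A)) (by simp)))]
  refine Finset.sum_congr rfl fun j _ => ?_
  rw [Finset.filter_filter]
  have : ∀ A ∈ Finset.univ.filter (fun A : Finset (Fin 8) => P A ∧ A.card = j),
      x ^ A.card * (1 - x) ^ (8 - A.card) = x ^ j * (1 - x) ^ (8 - j) := by
    intro A hA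
    rw [Finset.mem_filter] at hA
    rw [hA.2.2]
  rw [Finset.sum_congr rfl this, Finset.sum_const, nsmul_eq_mul]

lemma counts1 : ∀ j ∈ Finset.range 9,
    (Finset.univ.filter (fun A : Finset (Fin 8) => P1 A ∧ A.card = j)).card =
      [0, 0, 1, 7, 20, 30, 24, 8, 1][j]! := by decide

lemma counts2 : ∀ j ∈ Finset.range 9,
    (Finset.univ.filter (fun A : Finset (Fin 8) => P2 A ∧ A.card = j)).card =
      [0, 0, 1, 7, 20, 30, 24, 8, 1][j]! := by decide

/-- φ₁ and φ₂ are distinct structures with the same diagonal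
reliability polynomial x²+x³-x⁶-x⁷+x⁸, hence the same (tail) signature. -/
theorem stmt_19 :
    phi1 ≠ phi2 ∧
    (∀ x : ℝ,
      (∑ A : Finset (Fin 8), phi1 A * x ^ A.card * (1 - x) ^ (8 - A.card)) =
        x ^ 2 + x ^ 3 - x ^ 6 - x ^ 7 + x ^ 8) ∧
    (∀ x : ℝ,
      (∑ A : Finset (Fin 8), phi2 A * x ^ A.card * (1 - x) ^ (8 - A.card)) =
        x ^ 2 + x ^ 3 - x ^ 6 - x ^ 7 + x ^ 8) ∧
    (∀ k ∈ Finset.range 9, tail8 phi1 k = tail8 phi2 k) ∧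
    (∀ k ∈ Finset.Icc 1 8,
      tail8 phi1 (k - 1) - tail8 phi1 k = tail8 phi2 (k - 1) - tail8 phi2 k) := by
  have hsum : ∀ m : ℕ,
      (∑ A ∈ Finset.univ.filter (fun A : Finset (Fin 8) => A.card = m), phi1 A) =
      (∑ A ∈ Finset.univ.filter (fun A : Finset (Fin 8) => A.card = m), phi2 A) := by
    intro m
    simp only [phi1_eq, phi2_eq, Finset.sum_boole, Finset.filter_filter]
    norm_cast
    by_cases hm : m < 9
    · have h1 := counts1 m (Finset.mem_range.mpr hm)
      have h2 := counts2 m (Finset.mem_range.mpr hm)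
      have e1 : (Finset.univ.filter (fun A : Finset (Fin 8) => A.card = m ∧ P1 A))
          = Finset.univ.filter (fun A : Finset (Fin 8) => P1 A ∧ A.card = m) :=
        Finset.filter_congr fun A _ => and_comm
      have e2 : (Finset.univ.filter (fun A : Finset (Fin 8) => A.card = m ∧ P2 A))
          = Finset.univ.filter (fun A : Finset (Fin 8) => P2 A ∧ A.card = m) :=
        Finset.filter_congr fun A _ => and_comm
      rw [e1, e2, h1, h2]
    · have : ∀ P : Finset (Fin 8) → Prop, ∀ _ : DecidablePred P,
          (Finset.univ.filter (fun A : Finset (Fin 8) => A.card = m ∧ P A)) = ∅ := by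
        intro P _
        apply Finset.filter_false_of_mem
        intro A _
        rintro ⟨h, -⟩
        have : A.card ≤ 8 := le_trans (Finset.card_le_card (Finset.subset_univ A)) (by simp)
        omega
      rw [this P1 inferInstance, this P2 inferInstance]
  have htail : ∀ k : ℕ, tail8 phi1 k = tail8 phi2 k := by
    intro k; unfold tail8; rw [hsum]
  refine ⟨?_, ?_, ?_, fun k _ => htail k, fun k _ => by rw [htail, htail]⟩
  · intro h
    have := congrFun h ({0, 1} : Finset (Fin 8))
    rw [phi1_eq, phi2_eq] at this
    rw [if_pos (by decide), if_neg (by decide)] at this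
    norm_num at this
  · intro x
    have : (∑ A : Finset (Fin 8), phi1 A * x ^ A.card * (1 - x) ^ (8 - A.card)) =
        ∑ A : Finset (Fin 8), (if P1 A then (1:ℝ) else 0) * x ^ A.card * (1 - x) ^ (8 - A.card) := by
      refine Finset.sum_congr rfl fun A _ => by rw [phi1_eq]
    rw [this, sum_poly]
    have := counts1
    simp only [Finset.mem_range] at this
    rw [Finset.sum_range_succ, Finset.sum_range_succ, Finset.sum_range_succ,
      Finset.sum_range_succ, Finset.sum_range_succ, Finset.sum_range_succ,
      Finset.sum_range_succ, Finset.sum_range_succ, Finset.sum_range_succ,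
      this 0 (by norm_num), this 1 (by norm_num), this 2 (by norm_num),
      this 3 (by norm_num), this 4 (by norm_num), this 5 (by norm_num),
      this 6 (by norm_num), this 7 (by norm_num), this 8 (by norm_num)]
    simp only [List.getElem!_cons_zero, List.getElem!_cons_succ]
    norm_num
    ring
  · intro x
    have : (∑ A : Finset (Fin 8), phi2 A * x ^ A.card * (1 - x) ^ (8 - A.card)) =
        ∑ A : Finset (Fin 8), (if P2 A then (1:ℝ) else 0) * x ^ A.card * (1 - x) ^ (8 - A.card) := by
      refine Finset.sum_congr rfl fun A _ => by rw [phi2_eq]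
    rw [this, sum_poly]
    have := counts2
    simp only [Finset.mem_range] at this
    rw [Finset.sum_range_succ, Finset.sum_range_succ, Finset.sum_range_succ,
      Finset.sum_range_succ, Finset.sum_range_succ, Finset.sum_range_succ,
      Finset.sum_range_succ, Finset.sum_range_succ, Finset.sum_range_succ,
      this 0 (by norm_num), this 1 (by norm_num), this 2 (by norm_num),
      this 3 (by norm_num), this 4 (by norm_num), this 5 (by norm_num),
      this 6 (by norm_num), this 7 (by norm_num), this 8 (by norm_num)]
    simp only [List.getElem!_cons_zero, List.getElem!_cons_succ]
    norm_num
    ring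
end
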